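/- Let S be a semicopula and let ⋆ : [0,1]² → [0,1] be nondecreasing and left-continuous with 0 ⋆ 1 = 1 ⋆ 0 = 0. Then the Chebyshev type inequality I_S(f⋆g) ≥ I_S(f) ⋆ I_S(g) holds for every capacity m on any measurable space (X,𝒜) and all f,g ∈ F^1 comonotone on X if and only if S(a⋆b, c) ≥ max( S(a,c) ⋆ b, a ⋆ S(b,c) ) for all a,b,c ∈ [0,1]. -/

import Mathlib

open Set ENNReal Filter Topology

noncomputable def uSugeno {X : Type*} (ybar : ℝ≥0∞) (op : ℝ≥0∞ → ℝ≥0∞ → ℝ≥0∞)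
    (m : Set X → ℝ≥0∞) (D : Set X) (f : X → ℝ≥0∞) : ℝ≥0∞ :=
  ⨆ t ∈ Set.Iic ybar, op t (m (D ∩ {x | t ≤ f x}))

noncomputable def qInt {X : Type*} (oti : ℝ≥0∞ → ℝ≥0∞ → ℝ≥0∞)
    (m : Set X → ℝ≥0∞) (f : X → ℝ≥0∞) : ℝ≥0∞ :=
  ⨆ t ∈ Set.Iic (1 : ℝ≥0∞), oti (m {x | t ≤ f x}) t

def Mono2On (op : ℝ≥0∞ → ℝ≥0∞ → ℝ≥0∞) (s t : Set ℝ≥0∞) : Prop :=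
  ∀ ⦃a₁⦄, a₁ ∈ s → ∀ ⦃b₁⦄, b₁ ∈ t → ∀ ⦃a₂⦄, a₂ ∈ s → ∀ ⦃b₂⦄, b₂ ∈ t →
    a₁ ≤ a₂ → b₁ ≤ b₂ → op a₁ b₁ ≤ op a₂ b₂

def LeftContOn (g : ℝ≥0∞ → ℝ≥0∞) (s : Set ℝ≥0∞) : Prop :=
  ∀ x ∈ s, ContinuousWithinAt g (Set.Iic x) x

def RightContOn (g : ℝ≥0∞ → ℝ≥0∞) (s : Set ℝ≥0∞) : Prop :=
  ∀ x ∈ s, ContinuousWithinAt g (Set.Ici x) x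

def LeftCont2On (op : ℝ≥0∞ → ℝ≥0∞ → ℝ≥0∞) (s t : Set ℝ≥0∞) : Prop :=
  (∀ b ∈ t, ∀ a ∈ s, ContinuousWithinAt (fun x => op x b) (Set.Iic a) a) ∧
  (∀ a ∈ s, ∀ b ∈ t, ContinuousWithinAt (fun y => op a y) (Set.Iic b) b)

def mRange {X : Type*} [MeasurableSpace X] (m : Set X → ℝ≥0∞) : Set ℝ≥0∞ :=
  {c | ∃ A : Set X, MeasurableSet A ∧ m A = c}

def MonotoneMeasure {X : Type*} [MeasurableSpace X] (m : Set X → ℝ≥0∞) : Prop :=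
  m ∅ = 0 ∧ 0 < m Set.univ ∧
    ∀ ⦃A B : Set X⦄, MeasurableSet A → MeasurableSet B → A ⊆ B → m A ≤ m B

def IsCapacity {X : Type*} [MeasurableSpace X] (m : Set X → ℝ≥0∞) : Prop :=
  m ∅ = 0 ∧ m Set.univ = 1 ∧
    ∀ ⦃A B : Set X⦄, MeasurableSet A → MeasurableSet B → A ⊆ B → m A ≤ m B

def ComonotoneOn {X : Type*} (D : Set X) (f g : X → ℝ≥0∞) : Prop :=
  ∀ x ∈ D, ∀ y ∈ D, f x < f y → g x ≤ g y

def IsSemicopula (S : ℝ≥0∞ → ℝ≥0∞ → ℝ≥0∞) : Prop :=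
  Mono2On S (Set.Iic 1) (Set.Iic 1) ∧
    ∀ a ∈ Set.Iic (1 : ℝ≥0∞), S a 1 = a ∧ S 1 a = a

def MPosDep {X : Type*} (m : Set X → ℝ≥0∞) (tri : ℝ≥0∞ → ℝ≥0∞ → ℝ≥0∞)
    (k : ℝ≥0∞) (A B : Set X) (f g : X → ℝ≥0∞) : Prop :=
  ∀ α ∈ Set.Iic k, ∀ β ∈ Set.Iic k,
    tri (m (A ∩ {x | α ≤ f x})) (m (B ∩ {x | β ≤ g x})) ≤
      m (A ∩ B ∩ {x | α ≤ f x} ∩ {x | β ≤ g x})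

open Filter Topology in
lemma isUpperSet_measurableSet {U : Set ℝ≥0∞} (hU : IsUpperSet U) : MeasurableSet U := by
  rcases eq_empty_or_nonempty U with h | h
  · simp [h]
  by_cases hm : sInf U ∈ U
  · have hE : U = Ici (sInf U) :=
      subset_antisymm (fun x hx => sInf_le hx) (fun x hx => hU hx hm)
    rw [hE]; exact measurableSet_Ici
  · have hE : U = Ioi (sInf U) := by
      apply subset_antisymm
      · exact fun x hx => lt_of_le_of_ne (sInf_le hx) (fun h' => hm (by rw [h']; exact hx))
      · intro x hx
        obtain ⟨u, hu, hux⟩ := sInf_lt_iff.mp (mem_Ioi.mp hx)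
        exact hU hux.le hu
    rw [hE]; exact measurableSet_Ioi

lemma lcsup {ι : Sort*} [Nonempty ι] (φ : ℝ≥0∞ → ℝ≥0∞) (A : ι → ℝ≥0∞)
    (hc : ContinuousWithinAt φ (Set.Iic (⨆ i, A i)) (⨆ i, A i)) :
    φ (⨆ i, A i) ≤ ⨆ i, φ (A i) := by
  have hp : (⨆ i, A i) = ⨆ i, A i := rfl
  by_cases hatt : ∃ i, A i = ⨆ i, A i
  · obtain ⟨i, hi⟩ := hatt; rw [← hi]; exact le_iSup (fun i => φ (A i)) i
  · have hpos : (0 : ℝ≥0∞) < ⨆ i, A i := by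
      rcases eq_or_ne (⨆ i, A i) 0 with h0 | h0
      · refine absurd ⟨Classical.arbitrary ι, ?_⟩ hatt
        have := (le_iSup A (Classical.arbitrary ι)).trans h0.le
        simp [h0, le_antisymm this (zero_le)]
      · exact pos_iff_ne_zero.2 h0
    refine le_of_forall_lt fun c hc' => ?_
    have hnb : Ioi c ∈ 𝓝 (φ (⨆ i, A i)) := Ioi_mem_nhds hc'
    have hmem : φ ⁻¹' Ioi c ∈ 𝓝[Set.Iic (⨆ i, A i)] (⨆ i, A i) := hc hnb
    rw [mem_nhdsLE_iff_exists_Ioc_subset' hpos] at hmem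
    obtain ⟨l, hl, hsub⟩ := hmem
    obtain ⟨i, hi⟩ := lt_iSup_iff.mp (show l < ⨆ i, A i from hl)
    have : φ (A i) ∈ Ioi c := hsub ⟨hi, le_iSup A i⟩
    exact lt_of_lt_of_le this (le_iSup (fun i => φ (A i)) i)

lemma comon_pairs {X : Type*} {f g : X → ℝ≥0∞} (h : ComonotoneOn Set.univ f g) (x y : X) :
    (f x ≤ f y ∧ g x ≤ g y) ∨ (f y ≤ f x ∧ g y ≤ g x) := by
  rcases lt_trichotomy (f x) (f y) with hlt | heq | hgt
  · exact Or.inl ⟨hlt.le, h x (mem_univ x) y (mem_univ y) hlt⟩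
  · rcases le_total (g x) (g y) with hg | hg
    · exact Or.inl ⟨heq.le, hg⟩
    · exact Or.inr ⟨heq.ge, hg⟩
  · exact Or.inr ⟨hgt.le, h y (mem_univ y) x (mem_univ x) hgt⟩

lemma comon_nested {X : Type*} {f g : X → ℝ≥0∞} (hcom : ComonotoneOn Set.univ f g)
    (α β : ℝ≥0∞) :
    {x | α ≤ f x} ⊆ {x | β ≤ g x} ∨ {x | β ≤ g x} ⊆ {x | α ≤ f x} := by
  by_contra h
  push_neg at h
  obtain ⟨h1, h2⟩ := h
  obtain ⟨x, hx1, hx2⟩ := not_subset.mp h1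
  obtain ⟨y, hy1, hy2⟩ := not_subset.mp h2
  rcases comon_pairs hcom x y with ⟨ha, hb⟩ | ⟨ha, hb⟩
  · exact hy2 (le_trans hx1 ha)
  · exact hx2 (le_trans hy1 hb)

lemma superlevel_meas {X : Type*} [MeasurableSpace X] {f g : X → ℝ≥0∞}
    (hf : Measurable f) (hg : Measurable g) (hf1 : ∀ x, f x ≤ 1) (hg1 : ∀ x, g x ≤ 1)
    (hcom : ComonotoneOn Set.univ f g)
    (star : ℝ≥0∞ → ℝ≥0∞ → ℝ≥0∞) (hstar_mono : Mono2On star (Set.Iic 1) (Set.Iic 1))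
    (t : ℝ≥0∞) :
    MeasurableSet {x | t ≤ star (f x) (g x)} := by
  have hfne : ∀ z, f z ≠ ∞ := fun z => ((hf1 z).trans_lt ENNReal.one_lt_top).ne
  have hgne : ∀ z, g z ≠ ∞ := fun z => ((hg1 z).trans_lt ENNReal.one_lt_top).ne
  set U : Set ℝ≥0∞ := {s | ∃ y, t ≤ star (f y) (g y) ∧ f y + g y ≤ s} with hUdef
  have hUup : IsUpperSet U := fun u v huv ⟨y, hy1, hy2⟩ => ⟨y, hy1, hy2.trans huv⟩
  have hset : {x | t ≤ star (f x) (g x)} = (fun x => f x + g x) ⁻¹' U := by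
    ext x
    constructor
    · exact fun hx => ⟨x, hx, le_rfl⟩
    · rintro ⟨y, hy1, hy2⟩
      rcases comon_pairs hcom y x with ⟨h1, h2⟩ | ⟨h1, h2⟩
      · exact hy1.trans (hstar_mono (hf1 y) (hg1 y) (hf1 x) (hg1 x) h1 h2)
      · -- h1 : f x ≤ f y, h2 : g x ≤ g y, hy2 : f y + g y ≤ f x + g x
        have hf' : f y ≤ f x := by
          have : f y + g y ≤ f x + g y := hy2.trans (add_le_add_right h2 (f x))
          exact (ENNReal.add_le_add_iff_right (hgne y)).mp this
        have hg' : g y ≤ g x := by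
          have : f y + g y ≤ f y + g x := hy2.trans (add_le_add_left h1 (g x))
          exact (ENNReal.add_le_add_iff_left (hfne y)).mp this
        exact hy1.trans (hstar_mono (hf1 y) (hg1 y) (hf1 x) (hg1 x) hf' hg')
  rw [hset]
  exact (hf.add hg) (isUpperSet_measurableSet hUup)


lemma le_biSup' {ι : Type*} {s : Set ι} (F : ι → ℝ≥0∞) {i : ι} (hi : i ∈ s) :
    F i ≤ ⨆ j ∈ s, F j :=
  le_iSup₂ (f := fun j _ => F j) i hi

theorem statement10
    (S : ℝ≥0∞ → ℝ≥0∞ → ℝ≥0∞) (hS : IsSemicopula S)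
    (star : ℝ≥0∞ → ℝ≥0∞ → ℝ≥0∞)
    (hstar_maps : ∀ a ∈ Set.Iic (1 : ℝ≥0∞), ∀ b ∈ Set.Iic (1 : ℝ≥0∞), star a b ∈ Set.Iic 1)
    (hstar_mono : Mono2On star (Set.Iic 1) (Set.Iic 1))
    (hstar_lc : LeftCont2On star (Set.Iic 1) (Set.Iic 1))
    (hstar_zero : star 0 1 = 0 ∧ star 1 0 = 0) :
    (∀ (Y : Type) [MeasurableSpace Y], ∀ m : Set Y → ℝ≥0∞, IsCapacity m →
      ∀ f g : Y → ℝ≥0∞, Measurable f → Measurable g →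
        (∀ x, f x ≤ 1) → (∀ x, g x ≤ 1) → ComonotoneOn Set.univ f g →
          star (uSugeno 1 S m Set.univ f) (uSugeno 1 S m Set.univ g)
            ≤ uSugeno 1 S m Set.univ fun x => star (f x) (g x))
    ↔
    (∀ a ∈ Set.Iic (1 : ℝ≥0∞), ∀ b ∈ Set.Iic (1 : ℝ≥0∞), ∀ c ∈ Set.Iic (1 : ℝ≥0∞),
      max (star (S a c) b) (star a (S b c)) ≤ S (star a b) c) := by
  have hS1 : ∀ {x y : ℝ≥0∞}, x ≤ 1 → y ≤ 1 → S x y ≤ 1 := fun {x y} hx hy =>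
    (hS.1 hx hy Set.self_mem_Iic Set.self_mem_Iic hx hy).trans (hS.2 1 Set.self_mem_Iic).1.le
  have h0mem : (0:ℝ≥0∞) ∈ Set.Iic 1 := Set.mem_Iic.mpr (zero_le)
  constructor
  · -- inequality implies condition
    intro H a ha b hb c hc
    classical
    set m : Set Bool → ℝ≥0∞ :=
      fun A => if A = ∅ then 0 else if A = Set.univ then 1 else c with hmdef
    have hm_le : ∀ A : Set Bool, m A ≤ 1 := by
      intro A
      simp only [hmdef]
      split
      · exact zero_le
      · split
        · exact le_rfl
        · exact hc
    have hmuniv : m Set.univ = 1 := by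
      have h1 : (Set.univ : Set Bool) ≠ ∅ := Set.univ_nonempty.ne_empty
      simp only [hmdef]
      rw [if_neg h1]
      exact if_pos trivial
    have hmcap : IsCapacity m := by
      refine ⟨by simp [hmdef], hmuniv, ?_⟩
      intro A B _ _ hAB
      by_cases hA : A = ∅
      · simp [hmdef, hA]
      · have hB : B ≠ ∅ := fun h => hA (Set.subset_empty_iff.mp (h ▸ hAB))
        by_cases hBu : B = Set.univ
        · rw [hBu, hmuniv]; exact hm_le A
        · have hAu : A ≠ Set.univ := fun h =>
            hBu (Set.eq_univ_of_univ_subset (h ▸ hAB))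
          simp only [hmdef, if_neg hA, if_neg hAu, if_neg hB, if_neg hBu, le_rfl]
    have hIle : ∀ h : Bool → ℝ≥0∞, uSugeno 1 S m Set.univ h ≤ 1 := by
      intro h
      simp only [uSugeno]
      exact iSup₂_le fun t ht => hS1 ht (hm_le _)
    have hmtrue : m {true} = c := by
      have h1 : ({true} : Set Bool) ≠ ∅ := Set.singleton_ne_empty _
      have h2 : ({true} : Set Bool) ≠ Set.univ := by
        intro h
        have : false ∈ ({true} : Set Bool) := h ▸ Set.mem_univ false
        simp at this
      simp only [hmdef, if_neg h1, if_neg h2]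
    have hab' : star a b ≤ 1 := hstar_maps a ha b hb
    -- generic lower bound: S v c ≤ integral when h true ≥ v
    have hlb : ∀ (h : Bool → ℝ≥0∞) (v : ℝ≥0∞), v ≤ 1 → v ≤ h true →
        S v c ≤ uSugeno 1 S m Set.univ h := by
      intro h v hv hvt
      have hterm : S v (m (Set.univ ∩ {x | v ≤ h x})) ≤ uSugeno 1 S m Set.univ h := by
        simp only [uSugeno]
        exact le_biSup' _ hv
      refine le_trans ?_ hterm
      have hne : (Set.univ ∩ {x | v ≤ h x}) ≠ ∅ :=
        Set.nonempty_iff_ne_empty.mp ⟨true, Set.mem_univ _, hvt⟩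
      have hcm : c ≤ m (Set.univ ∩ {x | v ≤ h x}) := by
        simp only [hmdef, if_neg hne]
        split
        · exact hc
        · exact le_rfl
      exact hS.1 hv hc hv (hm_le _) le_rfl hcm
    -- generic lower bound: v ≤ integral when h ≥ v everywhere
    have hlbu : ∀ (h : Bool → ℝ≥0∞) (v : ℝ≥0∞), v ≤ 1 → (∀ x, v ≤ h x) →
        v ≤ uSugeno 1 S m Set.univ h := by
      intro h v hv hvx
      have hset : (Set.univ ∩ {x | v ≤ h x}) = Set.univ := by
        ext x; simp [hvx x]
      have hterm : S v (m (Set.univ ∩ {x | v ≤ h x})) ≤ uSugeno 1 S m Set.univ h := by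
        simp only [uSugeno]
        exact le_biSup' _ hv
      rw [hset, hmuniv] at hterm
      rwa [(hS.2 v hv).1] at hterm
    -- generic upper bound
    have hub : ∀ (h : Bool → ℝ≥0∞) (v : ℝ≥0∞), v ≤ 1 → h false = 0 → h true = v →
        uSugeno 1 S m Set.univ h ≤ S v c := by
      intro h v hv hhf hht
      simp only [uSugeno]
      refine iSup₂_le fun t ht => ?_
      by_cases ht0 : t = 0
      · subst ht0
        have hset : (Set.univ ∩ {x | (0:ℝ≥0∞) ≤ h x}) = Set.univ := by
          ext x; simp
        rw [hset, hmuniv, (hS.2 0 h0mem).1]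
        exact zero_le
      · by_cases htv : t ≤ v
        · have hset : (Set.univ ∩ {x | t ≤ h x}) = {true} := by
            ext x
            cases x
            · simp [hhf, le_zero_iff, ht0]
            · simp [hht, htv]
          rw [hset, hmtrue]
          exact hS.1 ht hc hv hc htv le_rfl
        · have hset : (Set.univ ∩ {x | t ≤ h x}) = ∅ := by
            ext x
            cases x
            · simp [hhf, le_zero_iff, ht0]
            · simp [hht, htv]
          rw [hset, hmcap.1]
          calc S t 0 ≤ S 1 0 := hS.1 ht h0mem Set.self_mem_Iic h0mem ht le_rfl
            _ = 0 := (hS.2 0 h0mem).2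
            _ ≤ S v c := zero_le
    have hmeas : ∀ h : Bool → ℝ≥0∞, Measurable h := fun h => measurable_from_top
    refine max_le ?_ ?_
    · -- star (S a c) b ≤ S (star a b) c
      set f : Bool → ℝ≥0∞ := fun x => if x = true then a else 0 with hfdef
      set g : Bool → ℝ≥0∞ := fun _ => b with hgdef
      have hft : f true = a := by simp [hfdef]
      have hff : f false = 0 := by simp [hfdef]
      have hf1 : ∀ x, f x ≤ 1 := by
        intro x; cases x
        · rw [hff]; exact zero_le
        · rw [hft]; exact ha
      have hg1 : ∀ x, g x ≤ 1 := fun _ => hb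
      have hcom : ComonotoneOn Set.univ f g := fun x _ y _ _ => le_rfl
      have hineq := H Bool m hmcap f g (hmeas f) (hmeas g) hf1 hg1 hcom
      have hzero : star (f false) (g false) = 0 := by
        rw [hff]
        exact le_antisymm
          ((hstar_mono h0mem hb h0mem Set.self_mem_Iic le_rfl hb).trans hstar_zero.1.le)
          (zero_le)
      calc star (S a c) b
          ≤ star (uSugeno 1 S m Set.univ f) (uSugeno 1 S m Set.univ g) :=
            hstar_mono (hS1 ha hc) hb (hIle f) (hIle g)
              (hlb f a ha hft.ge) (hlbu g b hb fun _ => le_rfl)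
        _ ≤ uSugeno 1 S m Set.univ fun x => star (f x) (g x) := hineq
        _ ≤ S (star a b) c := hub _ (star a b) hab' hzero (by rw [hft])
    · -- star a (S b c) ≤ S (star a b) c
      set f : Bool → ℝ≥0∞ := fun _ => a with hfdef
      set g : Bool → ℝ≥0∞ := fun x => if x = true then b else 0 with hgdef
      have hgt : g true = b := by simp [hgdef]
      have hgf : g false = 0 := by simp [hgdef]
      have hf1 : ∀ x, f x ≤ 1 := fun _ => ha
      have hg1 : ∀ x, g x ≤ 1 := by
        intro x; cases x
        · rw [hgf]; exact zero_le
        · rw [hgt]; exact hb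
      have hcom : ComonotoneOn Set.univ f g := fun x _ y _ h => absurd h (lt_irrefl _)
      have hineq := H Bool m hmcap f g (hmeas f) (hmeas g) hf1 hg1 hcom
      have hzero : star (f false) (g false) = 0 := by
        rw [hgf]
        exact le_antisymm
          ((hstar_mono ha h0mem Set.self_mem_Iic h0mem ha le_rfl).trans hstar_zero.2.le)
          (zero_le)
      calc star a (S b c)
          ≤ star (uSugeno 1 S m Set.univ f) (uSugeno 1 S m Set.univ g) :=
            hstar_mono ha (hS1 hb hc) (hIle f) (hIle g)
              (hlbu f a ha fun _ => le_rfl) (hlb g b hb hgt.ge)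
        _ ≤ uSugeno 1 S m Set.univ fun x => star (f x) (g x) := hineq
        _ ≤ S (star a b) c := hub _ (star a b) hab' hzero (by rw [hgt])
  · -- condition implies inequality
    intro hcond Y _ m hm f g hf hg hf1 hg1 hcom
    have hmle : ∀ {A : Set Y}, MeasurableSet A → m A ≤ 1 := fun {A} hA =>
      hm.2.1 ▸ hm.2.2 hA MeasurableSet.univ (Set.subset_univ A)
    have hmf : ∀ t : ℝ≥0∞, MeasurableSet (Set.univ ∩ {x | t ≤ f x}) :=
      fun t => MeasurableSet.univ.inter (hf measurableSet_Ici)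
    have hmg : ∀ t : ℝ≥0∞, MeasurableSet (Set.univ ∩ {x | t ≤ g x}) :=
      fun t => MeasurableSet.univ.inter (hg measurableSet_Ici)
    -- the key pointwise estimate
    have key : ∀ α ∈ Set.Iic (1:ℝ≥0∞), ∀ β ∈ Set.Iic (1:ℝ≥0∞),
        star (S α (m (Set.univ ∩ {x | α ≤ f x}))) (S β (m (Set.univ ∩ {x | β ≤ g x})))
          ≤ uSugeno 1 S m Set.univ fun x => star (f x) (g x) := by
      intro α hα β hβ
      have hmα : m (Set.univ ∩ {x | α ≤ f x}) ≤ 1 := hmle (hmf α)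
      have hmβ : m (Set.univ ∩ {x | β ≤ g x}) ≤ 1 := hmle (hmg β)
      have hE : MeasurableSet (Set.univ ∩ {x | star α β ≤ star (f x) (g x)}) :=
        MeasurableSet.univ.inter (superlevel_meas hf hg hf1 hg1 hcom star hstar_mono _)
      have hab : star α β ≤ 1 := hstar_maps α hα β hβ
      have hterm : S (star α β) (m (Set.univ ∩ {x | star α β ≤ star (f x) (g x)}))
          ≤ uSugeno 1 S m Set.univ fun x => star (f x) (g x) := by
        simp only [uSugeno]
        exact le_biSup' _ hab
      refine le_trans ?_ hterm
      have hSα : S α (m (Set.univ ∩ {x | α ≤ f x})) ≤ α :=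
        (hS.1 hα hmα hα Set.self_mem_Iic le_rfl hmα).trans (hS.2 α hα).1.le
      have hSβ : S β (m (Set.univ ∩ {x | β ≤ g x})) ≤ β :=
        (hS.1 hβ hmβ hβ Set.self_mem_Iic le_rfl hmβ).trans (hS.2 β hβ).1.le
      rcases comon_nested hcom α β with hss | hss
      · -- {α ≤ f} ⊆ {β ≤ g}
        have h1 : star (S α (m (Set.univ ∩ {x | α ≤ f x})))
              (S β (m (Set.univ ∩ {x | β ≤ g x})))
            ≤ star (S α (m (Set.univ ∩ {x | α ≤ f x}))) β :=
          hstar_mono (hS1 hα hmα) (hS1 hβ hmβ) (hS1 hα hmα) hβ le_rfl hSβ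
        have h2 : star (S α (m (Set.univ ∩ {x | α ≤ f x}))) β
            ≤ S (star α β) (m (Set.univ ∩ {x | α ≤ f x})) :=
          le_trans (le_max_left _ _) (hcond α hα β hβ _ hmα)
        have hsub : (Set.univ ∩ {x | α ≤ f x})
            ⊆ Set.univ ∩ {x | star α β ≤ star (f x) (g x)} := by
          rintro x ⟨-, hx⟩
          exact ⟨trivial, hstar_mono hα hβ (hf1 x) (hg1 x) hx (hss hx)⟩
        have h3 : S (star α β) (m (Set.univ ∩ {x | α ≤ f x}))
            ≤ S (star α β) (m (Set.univ ∩ {x | star α β ≤ star (f x) (g x)})) :=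
          hS.1 hab hmα hab (hmle hE) le_rfl (hm.2.2 (hmf α) hE hsub)
        exact h1.trans (h2.trans h3)
      · -- {β ≤ g} ⊆ {α ≤ f}
        have h1 : star (S α (m (Set.univ ∩ {x | α ≤ f x})))
              (S β (m (Set.univ ∩ {x | β ≤ g x})))
            ≤ star α (S β (m (Set.univ ∩ {x | β ≤ g x}))) :=
          hstar_mono (hS1 hα hmα) (hS1 hβ hmβ) hα (hS1 hβ hmβ) hSα le_rfl
        have h2 : star α (S β (m (Set.univ ∩ {x | β ≤ g x})))
            ≤ S (star α β) (m (Set.univ ∩ {x | β ≤ g x})) :=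
          le_trans (le_max_right _ _) (hcond α hα β hβ _ hmβ)
        have hsub : (Set.univ ∩ {x | β ≤ g x})
            ⊆ Set.univ ∩ {x | star α β ≤ star (f x) (g x)} := by
          rintro x ⟨-, hx⟩
          exact ⟨trivial, hstar_mono hα hβ (hf1 x) (hg1 x) (hss hx) hx⟩
        have h3 : S (star α β) (m (Set.univ ∩ {x | β ≤ g x}))
            ≤ S (star α β) (m (Set.univ ∩ {x | star α β ≤ star (f x) (g x)})) :=
          hS.1 hab hmβ hab (hmle hE) le_rfl (hm.2.2 (hmg β) hE hsub)
        exact h1.trans (h2.trans h3)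
    -- now pass to suprema using left continuity
    have hP : uSugeno 1 S m Set.univ f
        = ⨆ i : Set.Iic (1:ℝ≥0∞), S i (m (Set.univ ∩ {x | (i:ℝ≥0∞) ≤ f x})) := by
      simp only [uSugeno]
      exact iSup_subtype'
    have hQ : uSugeno 1 S m Set.univ g
        = ⨆ j : Set.Iic (1:ℝ≥0∞), S j (m (Set.univ ∩ {x | (j:ℝ≥0∞) ≤ g x})) := by
      simp only [uSugeno]
      exact iSup_subtype'
    set F : Set.Iic (1:ℝ≥0∞) → ℝ≥0∞ :=
      fun i => S i (m (Set.univ ∩ {x | (i:ℝ≥0∞) ≤ f x})) with hFdef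
    set G : Set.Iic (1:ℝ≥0∞) → ℝ≥0∞ :=
      fun j => S j (m (Set.univ ∩ {x | (j:ℝ≥0∞) ≤ g x})) with hGdef
    have hF1 : ∀ i, F i ≤ 1 := fun i => hS1 i.2 (hmle (hmf i))
    have hG1 : ∀ j, G j ≤ 1 := fun j => hS1 j.2 (hmle (hmg j))
    have hne : Nonempty (Set.Iic (1:ℝ≥0∞)) := ⟨⟨0, h0mem⟩⟩
    have hp1 : (⨆ i, F i) ≤ 1 := iSup_le hF1
    have hq1 : (⨆ j, G j) ≤ 1 := iSup_le hG1
    rw [hP, hQ]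
    refine le_trans
      (lcsup (fun x => star x (⨆ j, G j)) F (hstar_lc.1 _ hq1 _ hp1))
      (iSup_le fun i => ?_)
    refine le_trans
      (lcsup (fun y => star (F i) y) G (hstar_lc.2 _ (hF1 i) _ hq1))
      (iSup_le fun j => ?_)
    exact key i i.2 j j.2
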